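/- Let (V,H,G) be a hypergram, let α be an n-qubit Pauli assignment of (V,H,G) with contextuality degree d, and let α' be any n'-qubit Pauli assignment of (V,H,G). Then the noncontextual bounds coincide: |H| − 2d' = |H| − 2d, where d' is the contextuality degree of α'; i.e., all Pauli assignments of (V,H,G) have the same noncontextual bound b = |H| − 2d. -/

import Mathlib

open scoped Classical
open Matrix

noncomputable section

/-- The space of `n`-qubit operators, realized as matrices indexed by
`Fin n → Fin 2` (the `n`-fold tensor-product index). -/
abbrev QMat (n : ℕ) := Matrix (Fin n → Fin 2) (Fin n → Fin 2) ℂ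

/-- The four Pauli matrices `I, X, Y, Z`. -/
def pauliMat : Fin 4 → Matrix (Fin 2) (Fin 2) ℂ
  | ⟨0, _⟩ => 1
  | ⟨1, _⟩ => !![0, 1; 1, 0]
  | ⟨2, _⟩ => !![0, -Complex.I; Complex.I, 0]
  | ⟨3, _⟩ => !![1, 0; 0, -1]

/-- The `n`-fold Kronecker (tensor) product `G₁ ⊗ ⋯ ⊗ Gₙ` of the Pauli matrices
selected by `g : Fin n → Fin 4`, as a matrix indexed by `Fin n → Fin 2`. -/
def nPauli {n : ℕ} (g : Fin n → Fin 4) : QMat n :=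
  Matrix.of fun r c => ∏ k, pauliMat (g k) (r k) (c k)

/-- `M` is an `n`-qubit Pauli observable. -/
def IsPauliObs (n : ℕ) (M : QMat n) : Prop := ∃ g : Fin n → Fin 4, M = nPauli g

/-- `I^⊗n`, the `n`-fold tensor product of the identity. -/
def idN (n : ℕ) : QMat n := nPauli (fun _ => ⟨0, by omega⟩)

/-- Product of `f` over a finite set of naturals, taken in increasing order
(well-defined without commutativity; agrees with the unordered product when the
factors pairwise commute). -/
def natFinsetProd {M : Type*} [Monoid M] (s : Finset ℕ) (f : ℕ → M) : M :=
  ((s.sort (· ≤ ·)).map f).prod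

/-- `(V,H,G)` is a hypergram: `V` a nonempty finite vertex set, `H` a set of
nonempty hyperedges covering `V`, `G` a set of 2-element edges on `V` forming a
simple reduced graph, no edge of `G` being contained in a hyperedge of `H`. -/
def IsHypergram (V : Finset ℕ) (H G : Finset (Finset ℕ)) : Prop :=
  V.Nonempty ∧
  (∀ h ∈ H, h ⊆ V ∧ h.Nonempty) ∧
  (∀ v ∈ V, ∃ h ∈ H, v ∈ h) ∧
  (∀ e ∈ G, e ⊆ V ∧ e.card = 2) ∧
  (∀ v ∈ V, ∃ e ∈ G, v ∈ e) ∧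
  (∀ v ∈ V, ∀ w ∈ V,
    (∀ u ∈ V, (({v, u} : Finset ℕ) ∈ G ↔ ({w, u} : Finset ℕ) ∈ G)) → v = w) ∧
  (∀ e ∈ G, ∀ h ∈ H, ¬ e ⊆ h)

/-- `α` is an `n`-qubit Pauli assignment of the hypergram `(V,H,G)`. -/
def IsPauliAssignment (V : Finset ℕ) (H G : Finset (Finset ℕ)) (n : ℕ)
    (α : ℕ → QMat n) : Prop :=
  (∀ v ∈ V, IsPauliObs n (α v)) ∧
  (∀ v ∈ V, α v ≠ idN n) ∧
  (∀ v₁ ∈ V, ∀ v₂ ∈ V, α v₁ = α v₂ → v₁ = v₂) ∧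
  (∀ v₁ ∈ V, ∀ v₂ ∈ V, v₁ ≠ v₂ →
    (α v₁ * α v₂ = -(α v₂ * α v₁) ↔ ({v₁, v₂} : Finset ℕ) ∈ G)) ∧
  (∀ h ∈ H, natFinsetProd h α = idN n ∨ natFinsetProd h α = -(idN n))

/-- The sign `sgn_α(h) ∈ {−1,1}` of a hyperedge `h`: `∏_{v∈h} α(v) = sgn_α(h)·I^⊗n`. -/
def quantumSgn {n : ℕ} (α : ℕ → QMat n) (h : Finset ℕ) : ℤ :=
  if natFinsetProd h α = idN n then 1 else -1

/-- The sign `sgn_a(h) = ∏_{v∈h} a(v)` of a hyperedge for a classical assignment. -/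
def classicalSgn (a : ℕ → ℤ) (h : Finset ℕ) : ℤ := ∏ v ∈ h, a v

/-- The contextuality degree of a Pauli assignment: the minimum over classical
assignments `a : V → {−1,1}` of the number of hyperedges whose signs differ. -/
def contextualityDegree {n : ℕ} (H : Finset (Finset ℕ)) (α : ℕ → QMat n) : ℕ :=
  sInf { d : ℕ | ∃ a : ℕ → ℤ, (∀ v, a v = 1 ∨ a v = -1) ∧
    d = (H.filter (fun h => quantumSgn α h ≠ classicalSgn a h)).card }

/-- The context (incidence) matrix of a hypergram over 𝔽₂. -/
def contextMatrix (V : Finset ℕ) (H : Finset (Finset ℕ)) :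
    Matrix {h // h ∈ H} {v // v ∈ V} (ZMod 2) :=
  Matrix.of fun h v => if v.1 ∈ h.1 then 1 else 0

/-- The anticommutation (adjacency) matrix of a hypergram over 𝔽₂. -/
def anticommMatrix (V : Finset ℕ) (G : Finset (Finset ℕ)) :
    Matrix {v // v ∈ V} {v // v ∈ V} (ZMod 2) :=
  Matrix.of fun i j => if ({i.1, j.1} : Finset ℕ) ∈ G then 1 else 0

/-- The standard symplectic form on `𝔽₂^{2n}`:
`⟨x,y⟩ = Σ_{k=1}^{n} (x_{2k−1} y_{2k} + x_{2k} y_{2k−1})`. -/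
def sympForm (n : ℕ) (x y : Fin (2 * n) → ZMod 2) : ZMod 2 :=
  ∑ k : Fin n,
    (x ⟨2 * k.1, by have := k.2; omega⟩ * y ⟨2 * k.1 + 1, by have := k.2; omega⟩ +
     x ⟨2 * k.1 + 1, by have := k.2; omega⟩ * y ⟨2 * k.1, by have := k.2; omega⟩)

/-- The single-qubit encoding `ψ(I)=(0,0), ψ(X)=(0,1), ψ(Y)=(1,1), ψ(Z)=(1,0)`. -/
def psi4 : Fin 4 → (ZMod 2) × (ZMod 2)
  | ⟨0, _⟩ => (0, 0)
  | ⟨1, _⟩ => (0, 1)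
  | ⟨2, _⟩ => (1, 1)
  | ⟨3, _⟩ => (1, 0)

/-- The encoding `ψ` of an `n`-qubit Pauli observable (given by its tensor
factors `g`) as a vector of `𝔽₂^{2n}`, concatenating the per-factor encodings. -/
def psiVec {n : ℕ} (g : Fin n → Fin 4) : Fin (2 * n) → ZMod 2 := fun idx =>
  if idx.1 % 2 = 0 then (psi4 (g ⟨idx.1 / 2, by have := idx.2; omega⟩)).1
  else (psi4 (g ⟨idx.1 / 2, by have := idx.2; omega⟩)).2

/-- All pairs of elements of `S` commute. -/
def PairComm {n : ℕ} (S : Finset (QMat n)) : Prop := ∀ a ∈ S, ∀ b ∈ S, a * b = b * a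

/-- The (well-defined) product of a finite set of pairwise commuting matrices. -/
def commProd {n : ℕ} (S : Finset (QMat n)) (h : PairComm S) : QMat n :=
  S.noncommProd id (fun a ha b hb _ => h a ha b hb)

/-- Pairwise commutation is inherited by subsets. -/
def pairCommOfSubset {n : ℕ} {S T : Finset (QMat n)} (hST : S ⊆ T) (h : PairComm T) :
    PairComm S := fun a ha b hb => h a (hST ha) b (hST hb)

/-- `Q` (pairwise commuting) is independent: no nonempty subset has product `±I^⊗n`. -/
def IsIndep {n : ℕ} (Q : Finset (QMat n)) (hQ : PairComm Q) : Prop :=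
  ∀ S : Finset (QMat n), ∀ (hS : S ⊆ Q), S.Nonempty →
    commProd S (pairCommOfSubset hS hQ) ≠ idN n ∧
    commProd S (pairCommOfSubset hS hQ) ≠ -(idN n)

/-- The vertex set `{1, …, 15}`. -/
def V15 : Finset ℕ := Finset.Icc 1 15

/-- The 15 lines of the doily. -/
def doilyLines : Finset (Finset ℕ) :=
  { {1,2,3}, {1,8,9}, {1,10,11}, {2,4,6}, {2,5,7}, {3,12,15}, {3,13,14},
    {4,8,12}, {4,10,14}, {5,8,13}, {5,10,15}, {6,9,15}, {6,11,13},
    {7,9,14}, {7,11,12} }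

/-- The 10 lines of the two-spread `H_{2s}`. -/
def twoSpreadLines : Finset (Finset ℕ) :=
  { {1,2,3}, {1,10,11}, {2,4,6}, {3,13,14}, {4,8,12}, {5,8,13}, {5,10,15},
    {6,9,15}, {7,9,14}, {7,11,12} }

/-- The anticommutation graph `G_d = G_{2s}`: pairs of distinct vertices not on a
common doily line. -/
def doilyG : Finset (Finset ℕ) :=
  (V15.powersetCard 2).filter (fun e => ∀ h ∈ doilyLines, ¬ e ⊆ h)



-- ===== auxiliary development =====
section Aux

lemma pauliMat_mul_self (a : Fin 4) : pauliMat a * pauliMat a = 1 := by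
  fin_cases a <;>
    · ext i j
      fin_cases i <;> fin_cases j <;>
        simp [pauliMat, Matrix.mul_apply, Fin.sum_univ_two, Matrix.one_apply,
          Complex.I_mul_I] <;> ring_nf <;> simp [Complex.I_sq]

lemma pauliMat_comm_or_anticomm (a b : Fin 4) :
    pauliMat b * pauliMat a = pauliMat a * pauliMat b ∨
    pauliMat b * pauliMat a = -(pauliMat a * pauliMat b) := by
  fin_cases a <;> fin_cases b <;>
    [left; left; left; left;
     left; left; right; right;
     left; right; left; right;
     left; right; right; left] <;>
    · ext i j
      fin_cases i <;> fin_cases j <;>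
        simp [pauliMat, Matrix.mul_apply, Fin.sum_univ_two, Matrix.neg_apply]

lemma nPauli_mul {n : ℕ} (g g' : Fin n → Fin 4) :
    nPauli g * nPauli g' =
      Matrix.of fun r c => ∏ k, (pauliMat (g k) * pauliMat (g' k)) (r k) (c k) := by
  ext r c
  simp only [Matrix.mul_apply, nPauli, Matrix.of_apply]
  have h1 : ∀ m : Fin n → Fin 2,
      (∏ k, pauliMat (g k) (r k) (m k)) * ∏ k, pauliMat (g' k) (m k) (c k)
        = ∏ k, (pauliMat (g k) (r k) (m k) * pauliMat (g' k) (m k) (c k)) := by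
    intro m; rw [Finset.prod_mul_distrib]
  simp only [h1]
  rw [Finset.prod_univ_sum (fun _ : Fin n => (Finset.univ : Finset (Fin 2)))
    (fun k j => pauliMat (g k) (r k) j * pauliMat (g' k) j (c k))]
  rw [Fintype.piFinset_univ]

lemma idN_eq_one (n : ℕ) : idN n = 1 := by
  ext r c
  simp only [idN, nPauli, Matrix.of_apply]
  have h1 : ∀ k : Fin n, pauliMat ⟨0, by omega⟩ (r k) (c k)
      = (1 : Matrix (Fin 2) (Fin 2) ℂ) (r k) (c k) := fun _ => rfl
  simp only [h1, Matrix.one_apply]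
  by_cases h : r = c
  · subst h; simp
  · rw [if_neg h]
    obtain ⟨k, hk⟩ := Function.ne_iff.mp h
    exact Finset.prod_eq_zero (Finset.mem_univ k) (if_neg hk)

lemma nPauli_mul_self {n : ℕ} (g : Fin n → Fin 4) : nPauli g * nPauli g = 1 := by
  rw [nPauli_mul, ← idN_eq_one]
  ext r c
  simp only [Matrix.of_apply, idN, nPauli]
  exact Finset.prod_congr rfl fun k _ => by rw [pauliMat_mul_self]; rfl

lemma prod_pm_one {ι : Type*} {M₀ : Type*} [CommMonoid M₀] [HasDistribNeg M₀]
    (s : Finset ι) (f : ι → M₀) (hf : ∀ k ∈ s, f k = 1 ∨ f k = -1) :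
    (∏ k ∈ s, f k) = 1 ∨ (∏ k ∈ s, f k) = -1 := by
  refine Finset.prod_induction f (fun x => x = 1 ∨ x = -1) ?_ (Or.inl rfl) hf
  rintro a b (rfl | rfl) (rfl | rfl) <;> simp

lemma nPauli_comm_or_anticomm {n : ℕ} (g g' : Fin n → Fin 4) :
    nPauli g * nPauli g' = nPauli g' * nPauli g ∨
    nPauli g * nPauli g' = -(nPauli g' * nPauli g) := by
  have key : ∀ k : Fin n, ∃ ε : ℂ, (ε = 1 ∨ ε = -1) ∧
      pauliMat (g' k) * pauliMat (g k) = ε • (pauliMat (g k) * pauliMat (g' k)) := by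
    intro k
    rcases pauliMat_comm_or_anticomm (g k) (g' k) with h | h
    · exact ⟨1, Or.inl rfl, by simpa using h⟩
    · exact ⟨-1, Or.inr rfl, by simpa using h⟩
  choose ε hε₁ hε₂ using key
  have hmain : nPauli g' * nPauli g = (∏ k, ε k) • (nPauli g * nPauli g') := by
    rw [nPauli_mul, nPauli_mul]
    ext r c
    simp only [Matrix.of_apply, Matrix.smul_apply, smul_eq_mul]
    calc ∏ k, (pauliMat (g' k) * pauliMat (g k)) (r k) (c k)
        = ∏ k, (ε k * (pauliMat (g k) * pauliMat (g' k)) (r k) (c k)) := by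
          refine Finset.prod_congr rfl fun k _ => ?_
          rw [hε₂ k, Matrix.smul_apply, smul_eq_mul]
      _ = (∏ k, ε k) * ∏ k, (pauliMat (g k) * pauliMat (g' k)) (r k) (c k) :=
          Finset.prod_mul_distrib
  rcases prod_pm_one Finset.univ ε (fun k _ => hε₁ k) with h | h
  · left; rw [hmain, h, one_smul]
  · right; rw [hmain, h, neg_smul, one_smul, neg_neg]

lemma natFinsetProd_eq_prod {M : Type*} [CommMonoid M] (s : Finset ℕ) (f : ℕ → M) :
    natFinsetProd s f = ∏ v ∈ s, f v := by
  rw [natFinsetProd, Finset.prod_eq_multiset_prod, ← Finset.sort_eq (s := s) (r := (· ≤ ·)),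
    Multiset.map_coe, Multiset.prod_coe]

lemma negone_ne_one_matrix {ι : Type*} [Fintype ι] [DecidableEq ι] [Nonempty ι] :
    (-1 : Matrix ι ι ℂ) ≠ 1 := by
  intro hc
  have i := Classical.arbitrary ι
  have := congrFun (congrFun hc i) i
  simp [Matrix.one_apply, Matrix.neg_apply] at this
  exact (by norm_num : (-1 : ℂ) ≠ 1) this


lemma natFinsetProd_empty {R : Type*} [Monoid R] (β : ℕ → R) :
    natFinsetProd ∅ β = 1 := by
  simp [natFinsetProd, Finset.sort_empty]

lemma natFinsetProd_insert {R : Type*} [Monoid R] (β : ℕ → R) {V : Finset ℕ}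
    (hcomm : ∀ x ∈ V, ∀ y ∈ V, Commute (β x) (β y)) {a : ℕ} {s : Finset ℕ}
    (haV : a ∈ V) (hs : s ⊆ V) (ha : a ∉ s) :
    natFinsetProd (insert a s) β = β a * natFinsetProd s β := by
  unfold natFinsetProd
  have hperm : List.Perm (((insert a s).sort (· ≤ ·)).map β)
      ((a :: s.sort (· ≤ ·)).map β) := by
    refine List.Perm.map β ?_
    rw [← Multiset.coe_eq_coe]
    rw [Finset.sort_eq, Finset.insert_val_of_notMem ha, ← Finset.sort_eq (s := s) (r := (· ≤ ·))]
    exact (Multiset.cons_coe a _).symm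
  have hpw : (((insert a s).sort (· ≤ ·)).map β).Pairwise Commute := by
    refine List.pairwise_of_forall_mem_list ?_
    intro x hx y hy
    obtain ⟨u, hu, rfl⟩ := List.mem_map.mp hx
    obtain ⟨w, hw, rfl⟩ := List.mem_map.mp hy
    have hu' : u ∈ insert a s := (Finset.mem_sort _).mp hu
    have hw' : w ∈ insert a s := (Finset.mem_sort _).mp hw
    have hins : insert a s ⊆ V := Finset.insert_subset haV hs
    exact hcomm u (hins hu') w (hins hw')
  rw [hperm.prod_eq' hpw]
  simp

lemma commute_natFinsetProd {R : Type*} [Monoid R] (β : ℕ → R) {V : Finset ℕ}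
    (hcomm : ∀ x ∈ V, ∀ y ∈ V, Commute (β x) (β y)) {a : ℕ} (haV : a ∈ V)
    {s : Finset ℕ} (hs : s ⊆ V) : Commute (β a) (natFinsetProd s β) := by
  refine Commute.list_prod_right _ _ ?_
  intro x hx
  obtain ⟨w, hw, rfl⟩ := List.mem_map.mp hx
  exact hcomm a haV w (hs ((Finset.mem_sort _).mp hw))

lemma natFinsetProd_mul_symmDiff {R : Type*} [Monoid R] (β : ℕ → R) {V : Finset ℕ}
    (hcomm : ∀ x ∈ V, ∀ y ∈ V, Commute (β x) (β y))
    (hsq : ∀ x ∈ V, β x * β x = 1) :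
    ∀ (t s : Finset ℕ), t ⊆ V → s ⊆ V →
      natFinsetProd s β * natFinsetProd t β = natFinsetProd (symmDiff s t) β := by
  classical
  intro t
  induction t using Finset.induction_on with
  | empty =>
      intro s _ _
      have hsd : symmDiff s ∅ = s := by ext v; simp [Finset.mem_symmDiff]
      rw [natFinsetProd_empty, mul_one, hsd]
  | @insert a t' ha ih =>
      intro s htV hsV
      have haV : a ∈ V := htV (Finset.mem_insert_self a t')
      have ht'V : t' ⊆ V := fun x hx => htV (Finset.mem_insert_of_mem hx)
      rw [natFinsetProd_insert β hcomm haV ht'V ha]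
      by_cases has : a ∈ s
      · have hsd : symmDiff s (insert a t') = symmDiff (s.erase a) t' := by
          ext v
          by_cases hva : v = a
          · subst hva; simp [Finset.mem_symmDiff, has, ha]
          · simp [Finset.mem_symmDiff, hva]
        have hs' : s = insert a (s.erase a) := (Finset.insert_erase has).symm
        have herase : natFinsetProd s β = β a * natFinsetProd (s.erase a) β := by
          conv_lhs => rw [hs']
          exact natFinsetProd_insert β hcomm haV
            (fun x hx => hsV (Finset.erase_subset a s hx)) (Finset.notMem_erase a s)
        have hcommaa : Commute (β a) (natFinsetProd (s.erase a) β) :=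
          commute_natFinsetProd β hcomm haV (fun x hx => hsV (Finset.erase_subset a s hx))
        calc natFinsetProd s β * (β a * natFinsetProd t' β)
            = (natFinsetProd s β * β a) * natFinsetProd t' β := by rw [mul_assoc]
          _ = (β a * natFinsetProd (s.erase a) β * β a) * natFinsetProd t' β := by
              rw [herase]
          _ = (β a * β a * natFinsetProd (s.erase a) β) * natFinsetProd t' β := by
              rw [mul_assoc (β a), ← hcommaa.eq, ← mul_assoc]
          _ = natFinsetProd (s.erase a) β * natFinsetProd t' β := by
              rw [hsq a haV, one_mul]
          _ = natFinsetProd (symmDiff (s.erase a) t') β :=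
              ih _ ht'V (fun x hx => hsV (Finset.erase_subset a s hx))
          _ = natFinsetProd (symmDiff s (insert a t')) β := by rw [hsd]
      · have hsd : symmDiff s (insert a t') = insert a (symmDiff s t') := by
          ext v
          by_cases hva : v = a
          · subst hva; simp [Finset.mem_symmDiff, has, ha]
          · simp [Finset.mem_symmDiff, hva]
        have hnot : a ∉ symmDiff s t' := by
          simp [Finset.mem_symmDiff, has, ha]
        have hcommas : Commute (β a) (natFinsetProd s β) :=
          commute_natFinsetProd β hcomm haV hsV
        calc natFinsetProd s β * (β a * natFinsetProd t' β)
            = (natFinsetProd s β * β a) * natFinsetProd t' β := by rw [mul_assoc]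
          _ = (β a * natFinsetProd s β) * natFinsetProd t' β := by rw [hcommas.eq]
          _ = β a * (natFinsetProd s β * natFinsetProd t' β) := by rw [mul_assoc]
          _ = β a * natFinsetProd (symmDiff s t') β := by rw [ih s ht'V hsV]
          _ = natFinsetProd (insert a (symmDiff s t')) β := by
              rw [natFinsetProd_insert β hcomm haV
                (fun x hx => by
                  rcases Finset.mem_symmDiff.mp hx with ⟨h1, _⟩ | ⟨h1, _⟩
                  exacts [hsV h1, ht'V h1]) hnot]
          _ = natFinsetProd (symmDiff s (insert a t')) β := by rw [hsd]

lemma prod_if_eq_sum (s : Finset ℕ) (c : ℕ → ZMod 2) :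
    (∏ v ∈ s, (if c v = 0 then (1 : ℤ) else -1))
      = if (∑ v ∈ s, c v) = 0 then 1 else -1 := by
  classical
  induction s using Finset.induction_on with
  | empty => simp
  | @insert a t ha ih =>
      rw [Finset.prod_insert ha, Finset.sum_insert ha, ih]
      have key : ∀ u t : ZMod 2,
          ((if u = 0 then (1:ℤ) else -1) * (if t = 0 then 1 else -1))
            = if u + t = 0 then 1 else -1 := by decide
      rw [key]

/-- Key abstract lemma: a pairwise-commuting family of involutions whose products
over hyperedges are `±1` has a sign function realized by a classical assignment. -/
lemma exists_classical_of_comm {R : Type*} [Ring R]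
    (V : Finset ℕ) (H : Finset (Finset ℕ)) (β : ℕ → R)
    (hH : ∀ h ∈ H, h ⊆ V)
    (hcomm : ∀ v ∈ V, ∀ w ∈ V, Commute (β v) (β w))
    (hsq : ∀ v ∈ V, β v * β v = 1)
    (hne : (-1 : R) ≠ 1)
    (ε : Finset ℕ → ℤ)
    (hprod : ∀ h ∈ H, (natFinsetProd h β = 1 ∧ ε h = 1) ∨
      (natFinsetProd h β = -1 ∧ ε h = -1)) :
    ∃ b : ℕ → ℤ, (∀ v, b v = 1 ∨ b v = -1) ∧ ∀ h ∈ H, ε h = ∏ v ∈ h, b v := by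
  classical
  by_cases htriv : ∀ h ∈ H, natFinsetProd h β = 1
  · refine ⟨fun _ => 1, fun _ => Or.inl rfl, fun h hh => ?_⟩
    rcases hprod h hh with ⟨_, hε⟩ | ⟨hp, _⟩
    · simp [hε]
    · exact absurd ((htriv h hh ▸ hp).symm) hne
  push_neg at htriv
  obtain ⟨h₀, hh₀, hp₀⟩ := htriv
  have hp₀' : natFinsetProd h₀ β = -1 ∧ ε h₀ = -1 := by
    rcases hprod h₀ hh₀ with ⟨hp, _⟩ | h
    · exact absurd hp hp₀
    · exact h
  -- the indicator-product map Θ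
  set A : (ℕ → ZMod 2) → Finset ℕ := fun x => V.filter (fun v => x v = 1) with hA
  set Θ : (ℕ → ZMod 2) → R := fun x => natFinsetProd (A x) β with hΘ
  have hAsub : ∀ x, A x ⊆ V := fun x => Finset.filter_subset _ _
  have hAadd : ∀ x y, A (x + y) = symmDiff (A x) (A y) := by
    intro x y
    ext v
    have key : ∀ a b : ZMod 2, (a + b = 1 ↔ (a = 1 ∧ ¬ b = 1) ∨ (b = 1 ∧ ¬ a = 1)) := by
      decide
    simp only [hA, Finset.mem_filter, Finset.mem_symmDiff, Pi.add_apply,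
      key (x v) (y v)]
    tauto
  have hΘadd : ∀ x y, Θ (x + y) = Θ x * Θ y := by
    intro x y
    rw [hΘ]
    simp only []
    rw [hAadd]
    exact (natFinsetProd_mul_symmDiff β hcomm hsq (A y) (A x) (hAsub y) (hAsub x)).symm
  have hΘ0 : Θ 0 = 1 := by
    have hA0 : A 0 = ∅ := by
      ext v; simp [hA]
    rw [hΘ]; simp only []; rw [hA0, natFinsetProd_empty]
  -- the kernel submodule
  set K : Submodule (ZMod 2) (ℕ → ZMod 2) :=
    { carrier := {x | Θ x = 1}
      add_mem' := fun {x} {y} hx hy => by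
        simp only [Set.mem_setOf_eq] at *
        rw [hΘadd, hx, hy, one_mul]
      zero_mem' := hΘ0
      smul_mem' := fun cc x hx => by
        have hcc : cc = 0 ∨ cc = 1 := by
          have : ∀ u : ZMod 2, u = 0 ∨ u = 1 := by decide
          exact this cc
        rcases hcc with rfl | rfl
        · simp only [Set.mem_setOf_eq, zero_smul]
          exact hΘ0
        · simpa only [Set.mem_setOf_eq, one_smul] using hx } with hK
  have hmemK : ∀ x, x ∈ K ↔ Θ x = 1 := fun x => Iff.rfl
  -- the element x₀ ∉ K
  have hAx : ∀ (h : Finset ℕ), h ⊆ V →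
      A (fun v => if v ∈ h then (1 : ZMod 2) else 0) = h := by
    intro h hhV
    ext v
    by_cases hv : v ∈ h
    · simp [hA, hv, hhV hv]
    · simp [hA, hv]
  set x₀ : ℕ → ZMod 2 := fun v => if v ∈ h₀ then 1 else 0 with hx₀
  have hΘx₀ : Θ x₀ = -1 := by
    rw [hΘ]; simp only []
    rw [hx₀, hAx h₀ (hH h₀ hh₀)]
    exact hp₀'.1
  have hx₀K : x₀ ∉ K := by
    intro hcon
    rw [hmemK, hΘx₀] at hcon
    exact hne hcon
  -- a separating linear functional
  obtain ⟨φ, hφ⟩ : ∃ φ : Module.Dual (ZMod 2) ((ℕ → ZMod 2) ⧸ K),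
      φ (Submodule.Quotient.mk x₀) ≠ 0 := by
    by_contra hcon
    push_neg at hcon
    have := (Module.forall_dual_apply_eq_zero_iff (ZMod 2)
      (Submodule.Quotient.mk (p := K) x₀)).mp hcon
    rw [Submodule.Quotient.mk_eq_zero] at this
    exact hx₀K this
  set ψ : (ℕ → ZMod 2) →ₗ[ZMod 2] ZMod 2 := φ.comp K.mkQ with hψ
  have hψK : ∀ x, Θ x = 1 → ψ x = 0 := by
    intro x hx
    rw [hψ]
    simp only [LinearMap.comp_apply, Submodule.mkQ_apply]
    rw [(Submodule.Quotient.mk_eq_zero K).mpr ((hmemK x).mpr hx), map_zero]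
  have hψ₀ : ψ x₀ ≠ 0 := by
    rw [hψ]
    simpa only [LinearMap.comp_apply, Submodule.mkQ_apply] using hφ
  set c : ℕ → ZMod 2 := fun v => ψ (Pi.single v 1) with hcdef
  refine ⟨fun v => if c v = 0 then 1 else -1,
    fun v => by by_cases h : c v = 0 <;> simp [h], ?_⟩
  intro h hh
  set xh : ℕ → ZMod 2 := fun v => if v ∈ h then 1 else 0 with hxh
  have hsum : xh = ∑ v ∈ h, Pi.single v 1 := by
    funext w
    rw [Finset.sum_apply]
    simp only [Pi.single_apply]
    rw [Finset.sum_ite_eq, hxh]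
  have hψxh : ψ xh = ∑ v ∈ h, c v := by
    rw [hsum, map_sum]
  have hbp : (∏ v ∈ h, (if c v = 0 then (1:ℤ) else -1))
      = (if ψ xh = 0 then (1:ℤ) else -1) := by
    rw [hψxh, prod_if_eq_sum]
  simp only []
  rw [hbp]
  rcases hprod h hh with ⟨hp, hε⟩ | ⟨hp, hε⟩
  · have hΘxh : Θ xh = 1 := by
      rw [hΘ]; simp only []
      rw [hxh, hAx h (hH h hh)]
      exact hp
    rw [hε, if_pos (hψK _ hΘxh)]
  · have hΘxh : Θ xh = -1 := by
      rw [hΘ]; simp only []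
      rw [hxh, hAx h (hH h hh)]
      exact hp
    have hK2 : Θ (xh + x₀) = 1 := by
      rw [hΘadd, hΘxh, hΘx₀, neg_mul_neg, one_mul]
    have h0 : ψ xh + ψ x₀ = 0 := by
      rw [← map_add]
      exact hψK _ hK2
    have heq : ψ xh = ψ x₀ := by
      have hz : ∀ a b : ZMod 2, a + b = 0 → a = b := by decide
      exact hz _ _ h0
    rw [hε, if_neg (by rw [heq]; exact hψ₀)]


open Kronecker

lemma list_prod_kronecker {n n' : ℕ} (α : ℕ → QMat n) (α' : ℕ → QMat n') (l : List ℕ) :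
    (l.map (fun v => α v ⊗ₖ α' v)).prod = ((l.map α).prod) ⊗ₖ ((l.map α').prod) := by
  induction l with
  | nil => simp
  | cons a t ih =>
      simp only [List.map_cons, List.prod_cons, ih]
      exact (Matrix.mul_kronecker_mul _ _ _ _).symm

lemma quantumSgn_pm {m : ℕ} (γ : ℕ → QMat m) (h : Finset ℕ) :
    quantumSgn γ h = 1 ∨ quantumSgn γ h = -1 := by
  unfold quantumSgn; split <;> simp

end Aux

open Kronecker

/-- All Pauli assignments of a hypergram have the same
noncontextual bound `b = |H| − 2d`. -/
theorem pauli_assignments_same_noncontextual_bound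
    (V : Finset ℕ) (H G : Finset (Finset ℕ)) (hgram : IsHypergram V H G)
    {n n' : ℕ} (α : ℕ → QMat n) (α' : ℕ → QMat n')
    (h₁ : IsPauliAssignment V H G n α) (h₂ : IsPauliAssignment V H G n' α') :
    (H.card : ℤ) - 2 * (contextualityDegree H α' : ℤ) =
    (H.card : ℤ) - 2 * (contextualityDegree H α : ℤ) := by
  classical
  obtain ⟨hVne, hHsub, -, -, -, -, -⟩ := hgram
  obtain ⟨hobs₁, hni₁, hinj₁, hac₁, hpm₁⟩ := h₁
  obtain ⟨hobs₂, hni₂, hinj₂, hac₂, hpm₂⟩ := h₂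
  -- squares
  have hsq₁ : ∀ v ∈ V, α v * α v = 1 := by
    intro v hv
    obtain ⟨g, hg⟩ := hobs₁ v hv
    rw [hg, nPauli_mul_self]
  have hsq₂ : ∀ v ∈ V, α' v * α' v = 1 := by
    intro v hv
    obtain ⟨g, hg⟩ := hobs₂ v hv
    rw [hg, nPauli_mul_self]
  -- commutation when not an edge
  have hcommQ₁ : ∀ v ∈ V, ∀ w ∈ V, v ≠ w → ({v, w} : Finset ℕ) ∉ G →
      α v * α w = α w * α v := by
    intro v hv w hw hvw hG
    obtain ⟨g, hg⟩ := hobs₁ v hv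
    obtain ⟨g', hg'⟩ := hobs₁ w hw
    rcases nPauli_comm_or_anticomm g g' with hc | hc
    · rw [hg, hg']; exact hc
    · exact absurd ((hac₁ v hv w hw hvw).mp (by rw [hg, hg']; exact hc)) hG
  have hcommQ₂ : ∀ v ∈ V, ∀ w ∈ V, v ≠ w → ({v, w} : Finset ℕ) ∉ G →
      α' v * α' w = α' w * α' v := by
    intro v hv w hw hvw hG
    obtain ⟨g, hg⟩ := hobs₂ v hv
    obtain ⟨g', hg'⟩ := hobs₂ w hw
    rcases nPauli_comm_or_anticomm g g' with hc | hc
    · rw [hg, hg']; exact hc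
    · exact absurd ((hac₂ v hv w hw hvw).mp (by rw [hg, hg']; exact hc)) hG
  -- the tensored family
  set β : ℕ → Matrix ((Fin n → Fin 2) × (Fin n' → Fin 2))
      ((Fin n → Fin 2) × (Fin n' → Fin 2)) ℂ := fun v => α v ⊗ₖ α' v with hβ
  have hnk1 : ∀ (A : QMat n) (B : QMat n'), (-A) ⊗ₖ B = -(A ⊗ₖ B) := fun A B => by
    rw [← neg_one_smul ℂ A, Matrix.smul_kronecker, neg_one_smul]
  have hnk2 : ∀ (A : QMat n) (B : QMat n'), A ⊗ₖ (-B) = -(A ⊗ₖ B) := fun A B => by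
    rw [← neg_one_smul ℂ B, Matrix.kronecker_smul, neg_one_smul]
  have hβsq : ∀ v ∈ V, β v * β v = 1 := by
    intro v hv
    rw [hβ]
    simp only []
    rw [← Matrix.mul_kronecker_mul, hsq₁ v hv, hsq₂ v hv, Matrix.one_kronecker_one]
  have hβcomm : ∀ v ∈ V, ∀ w ∈ V, Commute (β v) (β w) := by
    intro v hv w hw
    by_cases hvw : v = w
    · subst hvw; exact Commute.refl _
    by_cases hG : ({v, w} : Finset ℕ) ∈ G
    · have he₁ : α v * α w = -(α w * α v) := (hac₁ v hv w hw hvw).mpr hG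
      have he₂ : α' v * α' w = -(α' w * α' v) := (hac₂ v hv w hw hvw).mpr hG
      show β v * β w = β w * β v
      rw [hβ]
      simp only []
      rw [← Matrix.mul_kronecker_mul, ← Matrix.mul_kronecker_mul, he₁, he₂,
        hnk1, hnk2, neg_neg]
    · show β v * β w = β w * β v
      rw [hβ]
      simp only []
      rw [← Matrix.mul_kronecker_mul, ← Matrix.mul_kronecker_mul,
        hcommQ₁ v hv w hw hvw hG, hcommQ₂ v hv w hw hvw hG]
  have hne : (-1 : Matrix ((Fin n → Fin 2) × (Fin n' → Fin 2))
      ((Fin n → Fin 2) × (Fin n' → Fin 2)) ℂ) ≠ 1 := negone_ne_one_matrix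
  have hnegid : ∀ m : ℕ, -(idN m) ≠ idN m := by
    intro m hc
    rw [idN_eq_one] at hc
    exact negone_ne_one_matrix hc
  -- sign functions and the product condition
  set ε : Finset ℕ → ℤ := fun h => quantumSgn α h * quantumSgn α' h with hε
  have hprodβ : ∀ h ∈ H, (natFinsetProd h β = 1 ∧ ε h = 1) ∨
      (natFinsetProd h β = -1 ∧ ε h = -1) := by
    intro h hh
    have hk : natFinsetProd h β = natFinsetProd h α ⊗ₖ natFinsetProd h α' :=
      list_prod_kronecker α α' _
    rcases hpm₁ h hh with hq1 | hq1 <;> rcases hpm₂ h hh with hq2 | hq2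
    · left
      constructor
      · rw [hk, hq1, hq2, idN_eq_one, idN_eq_one, Matrix.one_kronecker_one]
      · rw [hε]
        simp only [quantumSgn, if_pos hq1, if_pos hq2]
        norm_num
    · right
      constructor
      · rw [hk, hq1, hq2, idN_eq_one, idN_eq_one, hnk2, Matrix.one_kronecker_one]
      · rw [hε]
        simp only [quantumSgn, if_pos hq1, if_neg (hq2 ▸ hnegid n')]
        norm_num
    · right
      constructor
      · rw [hk, hq1, hq2, idN_eq_one, idN_eq_one, hnk1, Matrix.one_kronecker_one]
      · rw [hε]
        simp only [quantumSgn, if_neg (hq1 ▸ hnegid n), if_pos hq2]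
        norm_num
    · left
      constructor
      · rw [hk, hq1, hq2, idN_eq_one, idN_eq_one, hnk1, hnk2, neg_neg,
          Matrix.one_kronecker_one]
      · rw [hε]
        simp only [quantumSgn, if_neg (hq1 ▸ hnegid n), if_neg (hq2 ▸ hnegid n')]
        norm_num
  obtain ⟨b, hb, hbε⟩ := exists_classical_of_comm V H β
    (fun h hh => (hHsub h hh).1) hβcomm hβsq hne ε hprodβ
  -- translate to classical sign functions
  have hbcs : ∀ h ∈ H, quantumSgn α h * quantumSgn α' h = classicalSgn b h := by
    intro h hh
    have := hbε h hh
    rw [hε] at this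
    exact this
  have hcspm : ∀ (a : ℕ → ℤ), (∀ v, a v = 1 ∨ a v = -1) → ∀ h : Finset ℕ,
      classicalSgn a h = 1 ∨ classicalSgn a h = -1 := by
    intro a ha h
    exact prod_pm_one h a (fun v _ => ha v)
  have hiff₁ : ∀ (a : ℕ → ℤ), (∀ v, a v = 1 ∨ a v = -1) → ∀ h ∈ H,
      (quantumSgn α h ≠ classicalSgn (fun v => a v * b v) h ↔
        quantumSgn α' h ≠ classicalSgn a h) := by
    intro a ha h hh
    have hc2 : classicalSgn (fun v => a v * b v) h
        = classicalSgn a h * classicalSgn b h := Finset.prod_mul_distrib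
    have hεh := hbcs h hh
    rw [hc2, ← hεh]
    rcases quantumSgn_pm α h with h1 | h1 <;>
      rcases quantumSgn_pm α' h with h2 | h2 <;>
      rcases hcspm a ha h with h3 | h3 <;>
      rw [h1, h2, h3] <;> norm_num
  have hiff₂ : ∀ (a : ℕ → ℤ), (∀ v, a v = 1 ∨ a v = -1) → ∀ h ∈ H,
      (quantumSgn α' h ≠ classicalSgn (fun v => a v * b v) h ↔
        quantumSgn α h ≠ classicalSgn a h) := by
    intro a ha h hh
    have hc2 : classicalSgn (fun v => a v * b v) h
        = classicalSgn a h * classicalSgn b h := Finset.prod_mul_distrib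
    have hεh := hbcs h hh
    rw [hc2, ← hεh]
    rcases quantumSgn_pm α h with h1 | h1 <;>
      rcases quantumSgn_pm α' h with h2 | h2 <;>
      rcases hcspm a ha h with h3 | h3 <;>
      rw [h1, h2, h3] <;> norm_num
  have hpmmul : ∀ (a : ℕ → ℤ), (∀ v, a v = 1 ∨ a v = -1) →
      (∀ v, a v * b v = 1 ∨ a v * b v = -1) := by
    intro a ha v
    rcases ha v with h1 | h1 <;> rcases hb v with h2 | h2 <;> rw [h1, h2] <;> norm_num
  have hdeg : contextualityDegree H α' = contextualityDegree H α := by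
    have hsets : {d : ℕ | ∃ a : ℕ → ℤ, (∀ v, a v = 1 ∨ a v = -1) ∧
        d = (H.filter (fun h => quantumSgn α' h ≠ classicalSgn a h)).card}
        = {d : ℕ | ∃ a : ℕ → ℤ, (∀ v, a v = 1 ∨ a v = -1) ∧
        d = (H.filter (fun h => quantumSgn α h ≠ classicalSgn a h)).card} := by
      ext d
      simp only [Set.mem_setOf_eq]
      constructor
      · rintro ⟨a, ha, rfl⟩
        refine ⟨fun v => a v * b v, hpmmul a ha, ?_⟩
        exact congrArg Finset.card (Finset.filter_congr (fun h hh => hiff₁ a ha h hh)).symm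
      · rintro ⟨a, ha, rfl⟩
        refine ⟨fun v => a v * b v, hpmmul a ha, ?_⟩
        exact congrArg Finset.card (Finset.filter_congr (fun h hh => hiff₂ a ha h hh)).symm
    unfold contextualityDegree
    rw [hsets]
  rw [hdeg]

end
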